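/- Let p be a prime. In F_p[y,u], the span over all n ≥ 1 and all (λ1,λ2) ∈ F_p² of the powers (λ1 y + λ2 u)^n satisfies: for each n with 1 ≤ n ≤ p-1, the elements (λ1 y + λ2 u)^n for (λ1,λ2) ∈ F_p² span the full space of homogeneous polynomials of degree n in y, u. -/

import Mathlib

open MvPolynomial

section Aux

variable {p : ℕ}

lemma aux_choose_ne_zero (hp : p.Prime) {n k : ℕ} (hn : n < p) (hk : k ≤ n) :
    ((n.choose k : ZMod p)) ≠ 0 := by
  rw [Ne, ZMod.natCast_eq_zero_iff]
  intro hdvd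
  have hcd : n.choose k ∣ n.factorial := ⟨k.factorial * (n - k).factorial, by
    rw [← mul_assoc, Nat.choose_mul_factorial_mul_factorial hk]⟩
  exact absurd ((Nat.Prime.dvd_factorial hp).mp (hdvd.trans hcd)) (not_le.mpr hn)

end Aux

/-- In `F_p[y,u]` (`y = X 0`, `u = X 1`), for each `1 ≤ n ≤ p-1` the powers
`(λ1 y + λ2 u)^n`, for `(λ1,λ2) ∈ F_p²`, span the full space of homogeneous polynomials
of degree `n`. -/
theorem stmt17 (p : ℕ) (hp : p.Prime) (n : ℕ) (h1 : 1 ≤ n) (h2 : n ≤ p - 1) :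
    Submodule.span (ZMod p)
        {q : MvPolynomial (Fin 2) (ZMod p) | ∃ a b : ZMod p, q = (a • X 0 + b • X 1) ^ n} =
      homogeneousSubmodule (Fin 2) (ZMod p) n := by
  haveI : Fact p.Prime := ⟨hp⟩
  have hnp : n < p := lt_of_le_of_lt h2 (Nat.sub_lt hp.pos one_pos)
  set S : Submodule (ZMod p) (MvPolynomial (Fin 2) (ZMod p)) :=
    Submodule.span (ZMod p)
      {q : MvPolynomial (Fin 2) (ZMod p) | ∃ a b : ZMod p, q = (a • X 0 + b • X 1) ^ n} with hS
  apply le_antisymm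
  · rw [hS, Submodule.span_le]
    rintro q ⟨a, b, rfl⟩
    rw [SetLike.mem_coe, mem_homogeneousSubmodule]
    have hbase : IsHomogeneous (a • X 0 + b • X 1 : MvPolynomial (Fin 2) (ZMod p)) 1 := by
      have h0 : (a • X 0 : MvPolynomial (Fin 2) (ZMod p)) = C a * X 0 := by
        rw [smul_eq_C_mul]
      have h1' : (b • X 1 : MvPolynomial (Fin 2) (ZMod p)) = C b * X 1 := by
        rw [smul_eq_C_mul]
      rw [h0, h1']
      exact (isHomogeneous_C_mul_X a 0).add (isHomogeneous_C_mul_X b 1)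
    simpa using hbase.pow n
  -- reverse inclusion
  · -- the expansion of a power of a linear form
    have hg : ∀ a : ZMod p, ((a • X 0 + (1 : ZMod p) • X 1 : MvPolynomial (Fin 2) (ZMod p)) ^ n)
        = ∑ k ∈ Finset.range (n + 1),
            (a ^ k * (n.choose k : ZMod p)) • (X 0 ^ k * X 1 ^ (n - k)) := by
      intro a
      rw [one_smul, add_pow]
      refine Finset.sum_congr rfl fun k _ => ?_
      rw [smul_pow, smul_eq_C_mul, smul_eq_C_mul, ← C_eq_coe_nat, map_mul]
      ring
    -- key: the scaled monomials lie in S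
    have key : ∀ j : ℕ, j ≤ n →
        (X 0 ^ j * X 1 ^ (n - j) : MvPolynomial (Fin 2) (ZMod p)) ∈ S := by
      intro j hj
      set v : Fin (n + 1) → ZMod p := fun i => ((i : ℕ) : ZMod p) with hv
      have hvinj : Function.Injective v := by
        intro i₁ i₂ h
        have h1' : ((i₁ : ℕ) : ZMod p).val = ((i₂ : ℕ) : ZMod p).val := congrArg ZMod.val h
        rw [ZMod.val_cast_of_lt (Nat.lt_of_lt_of_le i₁.isLt hnp),
          ZMod.val_cast_of_lt (Nat.lt_of_lt_of_le i₂.isLt hnp)] at h1'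
        exact Fin.ext h1'
      set V : Matrix (Fin (n + 1)) (Fin (n + 1)) (ZMod p) := Matrix.vandermonde v with hV
      have hdet : V.det ≠ 0 := Matrix.det_vandermonde_ne_zero_iff.mpr hvinj
      have hinv : V⁻¹ * V = 1 := Matrix.nonsing_inv_mul V (by
        rwa [isUnit_iff_ne_zero])
      set z : Fin (n + 1) → MvPolynomial (Fin 2) (ZMod p) :=
        fun k => X 0 ^ (k : ℕ) * X 1 ^ (n - (k : ℕ)) with hz
      set c : Fin (n + 1) → ZMod p := fun k => (n.choose (k : ℕ) : ZMod p) with hc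
      set g : Fin (n + 1) → MvPolynomial (Fin 2) (ZMod p) :=
        fun i => (v i • X 0 + (1 : ZMod p) • X 1) ^ n with hgdef
      have hgS : ∀ i, g i ∈ S := fun i =>
        Submodule.subset_span ⟨v i, 1, rfl⟩
      have hgsum : ∀ i, g i = ∑ k : Fin (n + 1), (V i k * c k) • z k := by
        intro i
        rw [hgdef]
        dsimp only
        rw [hg (v i), Finset.sum_range fun k => (v i ^ k * (n.choose k : ZMod p)) •
          (X 0 ^ k * X 1 ^ (n - k) : MvPolynomial (Fin 2) (ZMod p))]
        rfl
      -- invert the Vandermonde system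
      have hcz : ∀ j' : Fin (n + 1), c j' • z j' ∈ S := by
        intro j'
        have hcomb : (∑ i : Fin (n + 1), (V⁻¹ j' i) • g i) = c j' • z j' := by
          calc (∑ i : Fin (n + 1), (V⁻¹ j' i) • g i)
              = ∑ i : Fin (n + 1), ∑ k : Fin (n + 1),
                  (V⁻¹ j' i * (V i k * c k)) • z k := by
                refine Finset.sum_congr rfl fun i _ => ?_
                rw [hgsum i, Finset.smul_sum]
                exact Finset.sum_congr rfl fun k _ => by rw [smul_smul]
            _ = ∑ k : Fin (n + 1), ((∑ i : Fin (n + 1), V⁻¹ j' i * V i k) * c k) • z k := by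
                rw [Finset.sum_comm]
                refine Finset.sum_congr rfl fun k _ => ?_
                conv_rhs => rw [mul_smul, Finset.sum_smul]
                refine Finset.sum_congr rfl fun i _ => ?_
                rw [smul_smul, mul_assoc]
            _ = ∑ k : Fin (n + 1), (((V⁻¹ * V) j' k) * c k) • z k := by
                refine Finset.sum_congr rfl fun k _ => ?_
                rw [Matrix.mul_apply]
            _ = c j' • z j' := by
                rw [hinv]
                rw [Finset.sum_eq_single j']
                · rw [Matrix.one_apply_eq, one_mul]
                · intro k _ hk
                  rw [Matrix.one_apply_ne' hk, zero_mul, zero_smul]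
                · intro h; exact absurd (Finset.mem_univ j') h
        rw [← hcomb]
        exact Submodule.sum_mem S fun i _ => Submodule.smul_mem S _ (hgS i)
      -- specialize to j
      have hj' : j < n + 1 := Nat.lt_succ_of_le hj
      have := hcz ⟨j, hj'⟩
      have hcne : c ⟨j, hj'⟩ ≠ 0 := aux_choose_ne_zero hp hnp hj
      have h2' := Submodule.smul_mem S (c ⟨j, hj'⟩)⁻¹ this
      rwa [smul_smul, inv_mul_cancel₀ hcne, one_smul] at h2'
    -- now every homogeneous polynomial of degree n is in S
    intro q hq
    rw [mem_homogeneousSubmodule] at hq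
    rw [q.as_sum]
    refine Submodule.sum_mem S fun d hd => ?_
    have hdeg : d.degree = n := by
      by_contra hne
      exact (MvPolynomial.mem_support_iff.mp hd) (hq.coeff_eq_zero hne)
    have hdsum : d 0 + d 1 = n := by
      rw [← hdeg, Finsupp.degree_apply]
      rw [Finset.sum_subset (Finset.subset_univ d.support)
        (fun i _ hi => Finsupp.notMem_support_iff.mp hi)]
      exact (Fin.sum_univ_two d).symm
    have hmon : (monomial d (coeff d q) : MvPolynomial (Fin 2) (ZMod p))
        = (coeff d q) • (X 0 ^ (d 0) * X 1 ^ (n - d 0)) := by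
      have hd1 : d 1 = n - d 0 := by omega
      rw [monomial_eq, Finsupp.prod_fintype _ _ (fun i => pow_zero _), Fin.prod_univ_two, hd1,
        smul_eq_C_mul]
    rw [hmon]
    exact Submodule.smul_mem S _ (key (d 0) (by omega))
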